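/- Let m = n, and suppose there exists a nonsingular matrix M ∈ R^{n×n} with σ_n(M A) > ‖M B‖₂. Then for every b ∈ R^n the equation A x − B|x| = b has a unique solution. -/

import Mathlib

open Matrix

/-- The `i`-th largest singular value of a real matrix (0-indexed),
defined as the `i`-th entry of the decreasingly sorted list of square roots
of the eigenvalues of `Aᴴ * A`; `0` if `i` is out of range. -/
noncomputable def sv {m n : ℕ} (A : Matrix (Fin m) (Fin n) ℝ) (i : ℕ) : ℝ :=
  ((List.ofFn fun j : Fin n =>
      Real.sqrt ((Matrix.isHermitian_conjTranspose_mul_self A).eigenvalues j)).insertionSort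
    (· ≥ ·)).getD i 0

/-- Euclidean norm of a vector. -/
noncomputable def vnorm {n : ℕ} (x : Fin n → ℝ) : ℝ := Real.sqrt (∑ i, x i ^ 2)

lemma spec_decomp {n : ℕ} (C : Matrix (Fin n) (Fin n) ℝ) (x : Fin n → ℝ) :
    ∃ y : Fin n → ℝ, (∑ i, y i ^ 2 = ∑ i, x i ^ 2) ∧
      ∑ i, ((C *ᵥ x) i) ^ 2 =
        ∑ j, (Matrix.isHermitian_conjTranspose_mul_self C).eigenvalues j * y j ^ 2 := by
  classical
  set hA := Matrix.isHermitian_conjTranspose_mul_self C with hAdef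
  set U : Matrix (Fin n) (Fin n) ℝ := (hA.eigenvectorUnitary : Matrix (Fin n) (Fin n) ℝ) with hU
  have hU1 : star U * U = 1 := Unitary.star_mul_self_of_mem (hA.eigenvectorUnitary).2
  have hU2 : U * star U = 1 := Unitary.mul_star_self_of_mem (hA.eigenvectorUnitary).2
  refine ⟨star U *ᵥ x, ?_, ?_⟩
  · have : ∀ v : Fin n → ℝ, ∑ i, v i ^ 2 = v ⬝ᵥ v := by
      intro v; simp [dotProduct, pow_two]
    rw [this, this]
    have hsU : star U = Uᵀ := by
      rw [Matrix.star_eq_conjTranspose, Matrix.conjTranspose_eq_transpose_of_trivial]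
    calc (star U *ᵥ x) ⬝ᵥ (star U *ᵥ x)
        = (x ᵥ* U) ⬝ᵥ (star U *ᵥ x) := by
          exact congrArg (fun v => v ⬝ᵥ (star U *ᵥ x)) (by rw [hsU, Matrix.mulVec_transpose])
      _ = x ⬝ᵥ (U *ᵥ (star U *ᵥ x)) := by rw [← Matrix.dotProduct_mulVec, Matrix.mulVec_mulVec]
      _ = x ⬝ᵥ x := by rw [Matrix.mulVec_mulVec, hU2, Matrix.one_mulVec]
  · have hxy : U *ᵥ (star U *ᵥ x) = x := by
      rw [Matrix.mulVec_mulVec, hU2, Matrix.one_mulVec]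
    have hsU : star U = Uᵀ := by
      rw [Matrix.star_eq_conjTranspose, Matrix.conjTranspose_eq_transpose_of_trivial]
    have hdiag : star U * (Cᴴ * C) * U = diagonal (RCLike.ofReal ∘ hA.eigenvalues) :=
      by have := Matrix.IsHermitian.conjStarAlgAut_star_eigenvectorUnitary hA
         rw [Unitary.conjStarAlgAut_star_apply] at this; exact this
    have hCT : Cᴴ = Cᵀ := Matrix.conjTranspose_eq_transpose_of_trivial C
    calc ∑ i, ((C *ᵥ x) i) ^ 2 = (C *ᵥ x) ⬝ᵥ (C *ᵥ x) := by simp [dotProduct, pow_two]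
      _ = x ⬝ᵥ ((Cᴴ * C) *ᵥ x) := by
          rw [← Matrix.mulVec_mulVec, Matrix.dotProduct_mulVec (v := x) (A := Cᴴ),
            hCT, Matrix.vecMul_transpose]
      _ = (star U *ᵥ x) ⬝ᵥ ((star U * (Cᴴ * C) * U) *ᵥ (star U *ᵥ x)) := by
          have hU2' : U * Uᵀ = 1 := by rw [← hsU]; exact hU2
          rw [Matrix.mulVec_mulVec,
            mul_assoc (star U * (Cᴴ * C)) U (star U), hU2, mul_one,
            ← Matrix.mulVec_mulVec x (star U) (Cᴴ * C),
            Matrix.dotProduct_mulVec (star U *ᵥ x) (star U), hsU,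
            Matrix.vecMul_transpose, Matrix.mulVec_mulVec, hU2', Matrix.one_mulVec]
      _ = ∑ j, hA.eigenvalues j * (star U *ᵥ x) j ^ 2 := by
          rw [hdiag]
          simp [dotProduct, Matrix.mulVec_diagonal, pow_two]
          ring_nf
          exact Finset.sum_congr rfl fun j _ => by ring

lemma sv_bounds {m n : ℕ} (A : Matrix (Fin m) (Fin n) ℝ) (hn : 0 < n) (i : ℕ) (hi : i < n) :
    (∀ j : Fin n, Real.sqrt ((Matrix.isHermitian_conjTranspose_mul_self A).eigenvalues j) ≤ sv A 0)
    ∧ (∀ j : Fin n, sv A (n-1) ≤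
        Real.sqrt ((Matrix.isHermitian_conjTranspose_mul_self A).eigenvalues j))
    ∧ 0 ≤ sv A i := by
  classical
  set f : Fin n → ℝ := fun j =>
    Real.sqrt ((Matrix.isHermitian_conjTranspose_mul_self A).eigenvalues j) with hf
  set l : List ℝ := (List.ofFn f).insertionSort (· ≥ ·) with hl
  have hlen : l.length = n := by
    rw [hl, List.length_insertionSort, List.length_ofFn]
  have hperm : l.Perm (List.ofFn f) := List.perm_insertionSort _ _
  have hsorted : l.Pairwise (· ≥ ·) := List.pairwise_insertionSort _ _
  have hmem : ∀ a ∈ l, ∃ j : Fin n, a = f j := by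
    intro a ha
    have := hperm.mem_iff.mp ha
    rw [List.mem_ofFn] at this
    obtain ⟨j, hj⟩ := this
    exact ⟨j, hj.symm⟩
  have hmem' : ∀ j : Fin n, f j ∈ l := by
    intro j
    exact hperm.mem_iff.mpr (by rw [List.mem_ofFn]; exact ⟨j, rfl⟩)
  have hrefl : IsRefl ℝ (· ≥ ·) := ⟨fun a => le_refl a⟩
  refine ⟨?_, ?_, ?_⟩
  · intro j
    obtain ⟨k, hk⟩ := List.get_of_mem (hmem' j)
    have h0 : (0 : ℕ) < l.length := hlen ▸ hn
    have : l.get ⟨0, h0⟩ ≥ l.get k :=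
      hsorted.rel_get_of_le (by exact Fin.mk_le_mk.mpr (Nat.zero_le _))
    rw [hk] at this
    rw [show sv A 0 = l.getD 0 0 from rfl, List.getD_eq_get _ _ ⟨0, h0⟩]
    exact this
  · intro j
    obtain ⟨k, hk⟩ := List.get_of_mem (hmem' j)
    have h0 : n - 1 < l.length := by omega
    have : l.get k ≥ l.get ⟨n-1, h0⟩ := by
      refine hsorted.rel_get_of_le ?_
      refine Fin.mk_le_mk.mpr ?_
      have := k.isLt
      omega
    rw [hk] at this
    rw [show sv A (n-1) = l.getD (n-1) 0 from rfl, List.getD_eq_get _ _ ⟨n-1, h0⟩]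
    exact this
  · have h0 : i < l.length := hlen ▸ hi
    rw [show sv A i = l.getD i 0 from rfl, List.getD_eq_get _ _ ⟨i, h0⟩]
    obtain ⟨j, hj⟩ := hmem (l.get ⟨i, h0⟩) (l.get_mem _)
    rw [hj, hf]
    exact Real.sqrt_nonneg _

lemma sv_low {n : ℕ} (C : Matrix (Fin n) (Fin n) ℝ) (hn : 0 < n) (x : Fin n → ℝ) :
    (sv C (n-1))^2 * ∑ i, x i ^ 2 ≤ ∑ i, ((C *ᵥ x) i) ^ 2 := by
  obtain ⟨y, hy1, hy2⟩ := spec_decomp C x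
  obtain ⟨-, hlo, hnn⟩ := sv_bounds C hn (n-1) (by omega)
  rw [hy2, ← hy1, Finset.mul_sum]
  refine Finset.sum_le_sum fun j _ => ?_
  refine mul_le_mul_of_nonneg_right ?_ (sq_nonneg _)
  have hev : 0 ≤ (Matrix.isHermitian_conjTranspose_mul_self C).eigenvalues j :=
    (Matrix.posSemidef_conjTranspose_mul_self C).eigenvalues_nonneg j
  calc (sv C (n-1))^2
      ≤ (Real.sqrt ((Matrix.isHermitian_conjTranspose_mul_self C).eigenvalues j))^2 :=
        pow_le_pow_left₀ hnn (hlo j) 2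
    _ = _ := Real.sq_sqrt hev

lemma sv_high {n : ℕ} (C : Matrix (Fin n) (Fin n) ℝ) (hn : 0 < n) (x : Fin n → ℝ) :
    ∑ i, ((C *ᵥ x) i) ^ 2 ≤ (sv C 0)^2 * ∑ i, x i ^ 2 := by
  obtain ⟨y, hy1, hy2⟩ := spec_decomp C x
  obtain ⟨hhi, -, -⟩ := sv_bounds C hn 0 hn
  rw [hy2, ← hy1, Finset.mul_sum]
  refine Finset.sum_le_sum fun j _ => ?_
  refine mul_le_mul_of_nonneg_right ?_ (sq_nonneg _)
  have hev : 0 ≤ (Matrix.isHermitian_conjTranspose_mul_self C).eigenvalues j :=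
    (Matrix.posSemidef_conjTranspose_mul_self C).eigenvalues_nonneg j
  calc (Matrix.isHermitian_conjTranspose_mul_self C).eigenvalues j
      = (Real.sqrt ((Matrix.isHermitian_conjTranspose_mul_self C).eigenvalues j))^2 :=
        (Real.sq_sqrt hev).symm
    _ ≤ (sv C 0)^2 := pow_le_pow_left₀ (Real.sqrt_nonneg _) (hhi j) 2

/-- If `m = n` and there is a nonsingular `M` with `σ_n(M A) > ‖M B‖₂`, then for every `b`
the equation `A x − B|x| = b` has a unique solution.  (With 0-indexing, the smallest
singular value `σ_n` is `sv _ (n-1)` and the spectral norm is `sv _ 0`.) -/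
theorem gave_unique_of_sv_square {n : ℕ} (A B M : Matrix (Fin n) (Fin n) ℝ)
    (hM : IsUnit M) (h : sv (M * A) (n - 1) > sv (M * B) 0) :
    ∀ b : Fin n → ℝ, ∃! x : Fin n → ℝ, A.mulVec x - B.mulVec (fun j => |x j|) = b := by
  intro b
  rcases Nat.eq_zero_or_pos n with h0 | hn
  · subst h0
    exact ⟨fun _ => 0, funext fun i => i.elim0, fun y _ => funext fun i => i.elim0⟩
  have hτ : 0 ≤ sv (M * B) 0 := (sv_bounds (M * B) hn 0 hn).2.2
  have hσpos : 0 < sv (M * A) (n - 1) := lt_of_le_of_lt hτ h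
  set σ := sv (M * A) (n - 1) with hσdef
  set τ := sv (M * B) 0 with hτdef
  -- A is invertible
  have hMA_inj : Function.Injective (M * A).mulVec := by
    intro x y hxy
    have hz : (M * A) *ᵥ (x - y) = 0 := by rw [Matrix.mulVec_sub, hxy, sub_self]
    have h1 := sv_low (M * A) hn (x - y)
    rw [hz] at h1
    simp only [Pi.zero_apply, ne_eq, OfNat.ofNat_ne_zero, not_false_eq_true, zero_pow,
      Finset.sum_const_zero] at h1
    have hge : 0 ≤ ∑ i, (x - y) i ^ 2 := Finset.sum_nonneg fun i _ => sq_nonneg _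
    have hsum0 : ∑ i, (x - y) i ^ 2 = 0 :=
      le_antisymm (by nlinarith [pow_pos hσpos 2]) hge
    have := (Finset.sum_eq_zero_iff_of_nonneg fun i _ => sq_nonneg ((x - y) i)).mp hsum0
    have hxy0 : x - y = 0 := funext fun i => by
      have := this i (Finset.mem_univ i); exact pow_eq_zero_iff (by norm_num) |>.mp this
    exact sub_eq_zero.mp hxy0
  have hA_inj : Function.Injective A.mulVec := by
    intro x y hxy
    apply hMA_inj
    rw [← Matrix.mulVec_mulVec, ← Matrix.mulVec_mulVec, hxy]
  have hAU : IsUnit A := Matrix.mulVec_injective_iff_isUnit.mp hA_inj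
  have hdet : IsUnit A.det := (Matrix.isUnit_iff_isUnit_det A).mp hAU
  have hinv1 : A⁻¹ * A = 1 := Matrix.nonsing_inv_mul A hdet
  have hinv2 : A * A⁻¹ = 1 := Matrix.mul_nonsing_inv A hdet
  set f : (Fin n → ℝ) → (Fin n → ℝ) :=
    fun x => A⁻¹ *ᵥ (b + B *ᵥ (fun j => |x j|)) with hfdef
  have hiff : ∀ x : Fin n → ℝ, (A *ᵥ x - B *ᵥ (fun j => |x j|) = b) ↔ f x = x := by
    intro x
    constructor
    · intro hx
      have hax : A *ᵥ x = b + B *ᵥ (fun j => |x j|) := by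
        rw [← hx]; ring
      rw [hfdef]
      simp only
      rw [← hax, Matrix.mulVec_mulVec, hinv1, Matrix.one_mulVec]
    · intro hx
      have hax : A *ᵥ x = b + B *ᵥ (fun j => |x j|) := by
        conv_lhs => rw [← hx]
        rw [hfdef]
        simp only
        rw [Matrix.mulVec_mulVec, hinv2, Matrix.one_mulVec]
      rw [hax]; ring
  -- contraction estimate
  have key : ∀ x y : Fin n → ℝ,
      ∑ i, (f x i - f y i) ^ 2 ≤ (τ / σ) ^ 2 * ∑ i, (x i - y i) ^ 2 := by
    intro x y
    set w : Fin n → ℝ := fun j => |x j| - |y j| with hwdef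
    have hu : f x - f y = A⁻¹ *ᵥ (B *ᵥ w) := by
      rw [hfdef]
      simp only
      rw [← Matrix.mulVec_sub, add_sub_add_left_eq_sub, ← Matrix.mulVec_sub]
      rfl
    have hMAu : (M * A) *ᵥ (f x - f y) = (M * B) *ᵥ w := by
      rw [hu, ← Matrix.mulVec_mulVec (A⁻¹ *ᵥ (B *ᵥ w)) M A,
        Matrix.mulVec_mulVec (B *ᵥ w) A A⁻¹, hinv2, Matrix.one_mulVec,
        Matrix.mulVec_mulVec w M B]
    have h1 := sv_low (M * A) hn (f x - f y)
    rw [hMAu] at h1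
    have h2 := sv_high (M * B) hn w
    have h3 : ∑ i, w i ^ 2 ≤ ∑ i, (x i - y i) ^ 2 := by
      refine Finset.sum_le_sum fun i _ => ?_
      rw [hwdef]
      calc (|x i| - |y i|) ^ 2 = (|(|x i| - |y i|)|) ^ 2 := (sq_abs _).symm
        _ ≤ (|x i - y i|) ^ 2 :=
            pow_le_pow_left₀ (abs_nonneg _) (abs_abs_sub_abs_le_abs_sub _ _) 2
        _ = (x i - y i) ^ 2 := sq_abs _
    have h4 : ∑ i, ((f x - f y) i) ^ 2 = ∑ i, (f x i - f y i) ^ 2 := rfl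
    rw [div_pow, div_mul_eq_mul_div, le_div_iff₀ (pow_pos hσpos 2)]
    have h5 : τ ^ 2 * ∑ i, w i ^ 2 ≤ τ ^ 2 * ∑ i, (x i - y i) ^ 2 :=
      mul_le_mul_of_nonneg_left h3 (sq_nonneg τ)
    rw [← h4]
    nlinarith [h1, h2, h5]
  -- Banach fixed point on Euclidean space
  set F : EuclideanSpace ℝ (Fin n) → EuclideanSpace ℝ (Fin n) :=
    fun z => WithLp.toLp 2 (f z) with hFdef
  set K : NNReal := ⟨τ / σ, div_nonneg hτ hσpos.le⟩ with hKdef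
  have hK1 : K < 1 := by
    rw [← NNReal.coe_lt_coe]
    exact (div_lt_one hσpos).mpr h
  have hKcoe : (K : ℝ) = τ / σ := rfl
  have hLip : LipschitzWith K F := by
    refine LipschitzWith.of_dist_le_mul fun z1 z2 => ?_
    rw [EuclideanSpace.dist_eq, EuclideanSpace.dist_eq]
    show Real.sqrt (∑ i, dist (f z1 i) (f z2 i) ^ 2) ≤
      (τ / σ) * Real.sqrt (∑ i, dist (z1 i) (z2 i) ^ 2)
    simp only [Real.dist_eq, sq_abs]
    rw [show (τ / σ) * Real.sqrt (∑ i, (z1 i - z2 i) ^ 2)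
        = Real.sqrt ((τ / σ) ^ 2 * ∑ i, (z1 i - z2 i) ^ 2) by
      rw [Real.sqrt_mul (sq_nonneg _), Real.sqrt_sq (div_nonneg hτ hσpos.le)]]
    exact Real.sqrt_le_sqrt (key z1 z2)
  have hCW : ContractingWith K F := ⟨hK1, hLip⟩
  have hne : Nonempty (EuclideanSpace ℝ (Fin n)) := ⟨0⟩
  obtain ⟨z, hz, hz'⟩ : ∃! z : EuclideanSpace ℝ (Fin n), F z = z :=
    ⟨hCW.fixedPoint, hCW.fixedPoint_isFixedPt, fun y hy => hCW.fixedPoint_unique hy⟩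
  exact ⟨z, (hiff z).mpr (congrArg WithLp.ofLp hz), fun x' hx' =>
    congrArg WithLp.ofLp (hz' (WithLp.toLp 2 x') (congrArg (WithLp.toLp 2) ((hiff x').mp hx')))⟩
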